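/- Let α, β be odd integers and ν, m ≥ 1 with m > ν + 1. The polynomial f(x) = 4^ν + 2ᵐβx + αx² is reducible in ℤ[[x]] if and only if: α ≡ 3 (mod 8) when m = ν + 2, and α ≡ 7 (mod 8) when m ≥ ν + 3. Equivalently, f(x) is reducible in ℤ[[x]] if and only if it is reducible in ℤ₂[x]. -/

import Mathlib

lemma aux_unit_iff {z : ℤ_[2]} : IsUnit z ↔ ¬ ((2:ℤ_[2]) ∣ z) := by
  rw [PadicInt.isUnit_iff]
  constructor
  · intro h hd
    have := (PadicInt.norm_lt_one_iff_dvd z).2 (by exact_mod_cast hd)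
    rw [h] at this; exact lt_irrefl _ this
  · intro h
    refine le_antisymm (PadicInt.norm_le_one _) ?_
    by_contra hlt
    push_neg at hlt
    exact h (by exact_mod_cast (PadicInt.norm_lt_one_iff_dvd z).1 hlt)

lemma aux_odd_unit {a : ℤ} (h : Odd a) : IsUnit (a : ℤ_[2]) := by
  rw [aux_unit_iff]
  intro hd
  have h1 : ‖(a : ℤ_[2])‖ < 1 := (PadicInt.norm_lt_one_iff_dvd _).2 (by exact_mod_cast hd)
  have h2 : (2:ℤ) ∣ a := by exact_mod_cast (PadicInt.norm_int_lt_one_iff_dvd a).1 h1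
  rw [Int.odd_iff] at h; omega

-- integer divisibility detected in Z_2
lemma aux_int_dvd {a : ℤ} {n : ℕ} {c : ℤ_[2]} (h : (a : ℤ_[2]) = 2^n * c) : (2^n : ℤ) ∣ a := by
  have h1 : ‖(a : ℤ_[2])‖ ≤ (2:ℝ)^(-(n:ℤ)) := by
    rw [h]
    have : ‖(2^n * c : ℤ_[2])‖ = ‖(2:ℤ_[2])^n‖ * ‖c‖ := by
      rw [norm_mul]
    rw [this]
    have h2 : ‖(2:ℤ_[2])^n‖ = (2:ℝ)^(-(n:ℤ)) := by
      have : ((2:ℕ):ℤ_[2]) = (2:ℤ_[2]) := by norm_num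
      rw [← this, PadicInt.norm_p_pow]; norm_num
    rw [h2]
    calc (2:ℝ)^(-(n:ℤ)) * ‖c‖ ≤ (2:ℝ)^(-(n:ℤ)) * 1 := by
          apply mul_le_mul_of_nonneg_left (PadicInt.norm_le_one c) (by positivity)
      _ = (2:ℝ)^(-(n:ℤ)) := mul_one _
  have := (PadicInt.norm_int_le_pow_iff_dvd (p := 2) (k := a) (n := n)).1 (by exact_mod_cast h1)
  exact_mod_cast this

-- approximate a 2-adic integer by an integer mod 2^n
lemma aux_approx (z : ℤ_[2]) (n : ℕ) : ∃ k : ℤ, ∃ c : ℤ_[2], z - k = 2^n * c := by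
  obtain ⟨k, hk⟩ := ZMod.intCast_surjective (PadicInt.toZModPow (p := 2) n z)
  have hker : z - k ∈ RingHom.ker (PadicInt.toZModPow (p := 2) n) := by
    rw [RingHom.mem_ker, map_sub, map_intCast, hk, sub_self]
  rw [PadicInt.ker_toZModPow, Ideal.mem_span_singleton] at hker
  obtain ⟨c, hc⟩ := hker
  exact ⟨k, c, by rw [hc]; norm_num⟩

lemma aux_sqrt {d : ℤ} (h : d % 8 = 1) : ∃ s : ℤ_[2], s^2 = (d : ℤ_[2]) ∧ IsUnit s := by
  set F : Polynomial ℤ_[2] := Polynomial.X^2 - Polynomial.C (d : ℤ_[2]) with hF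
  have heval : F.eval 1 = 1 - (d : ℤ_[2]) := by simp [hF]
  have hderiv : (Polynomial.derivative F).eval 1 = 2 := by
    simp [hF, Polynomial.derivative_sub, Polynomial.derivative_pow]
  have hnorm1 : ‖F.eval 1‖ ≤ (2:ℝ)^(-(3:ℤ)) := by
    rw [heval]
    have hdvd : ((2:ℤ)^3) ∣ (1 - d) := by omega
    have hcast : ((1 - d : ℤ) : ℤ_[2]) = 1 - (d : ℤ_[2]) := by push_cast; ring
    rw [← hcast]
    exact_mod_cast (PadicInt.norm_int_le_pow_iff_dvd (p := 2) (k := (1 - d : ℤ)) (n := 3)).2 (by exact_mod_cast hdvd)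
  have hnorm2 : ‖(Polynomial.derivative F).eval 1‖ = (1:ℝ)/2 := by
    rw [hderiv]
    have h2 : ((2:ℕ):ℤ_[2]) = (2:ℤ_[2]) := by norm_num
    rw [← h2, PadicInt.norm_p]
    norm_num
  have hlt : ‖F.eval 1‖ < ‖(Polynomial.derivative F).eval 1‖^2 := by
    rw [hnorm2]
    calc ‖F.eval 1‖ ≤ (2:ℝ)^(-(3:ℤ)) := hnorm1
      _ < ((1:ℝ)/2)^2 := by norm_num
  obtain ⟨z, hz, -, -, -⟩ := hensels_lemma hlt
  have hz2 : z^2 = (d : ℤ_[2]) := by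
    have : z^2 - (d:ℤ_[2]) = 0 := by simpa [hF] using hz
    exact sub_eq_zero.1 this
  refine ⟨z, hz2, ?_⟩
  rw [aux_unit_iff]
  intro hdvd
  obtain ⟨c, hc⟩ := hdvd
  have h4 : ((d:ℤ):ℤ_[2]) = 2^2 * c^2 := by rw [← hz2, hc]; ring
  have := aux_int_dvd h4
  omega

lemma aux_sq_mod8 {d : ℤ} (s : ℤ_[2]) (hs : s^2 = (d:ℤ_[2])) (hd : d % 2 = 1) :
    d % 8 = 1 := by
  have hsu : IsUnit s := by
    rw [aux_unit_iff]
    intro hdvd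
    obtain ⟨c, hc⟩ := hdvd
    have h4 : ((d:ℤ):ℤ_[2]) = 2^2 * c^2 := by rw [← hs, hc]; ring
    have := aux_int_dvd h4
    omega
  set φ := PadicInt.toZModPow (p := 2) 3 with hφ
  have hx : (φ s)^2 = ((d : ℤ) : ZMod (2^3)) := by
    rw [← map_pow, hs, map_intCast]
  have hxu : IsUnit (φ s) := hsu.map φ
  have key : ∀ x : ZMod (2^3), IsUnit x → ∀ e : ZMod (2^3), x^2 = e → e = ((1:ℤ) : ZMod (2^3)) := by decide
  have := key _ hxu _ hx
  have : ((d:ℤ) : ZMod 8) = ((1:ℤ) : ZMod 8) := by exact_mod_cast this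
  have := (ZMod.intCast_eq_intCast_iff' _ _ _).1 this
  omega

lemma aux_cond_iff {α β : ℤ} (hα : Odd α) (hβ : Odd β) {μ : ℕ} (hμ : 1 ≤ μ) :
    ((4:ℤ)^μ * β^2 - α) % 8 = 1 ↔ ((μ = 1 ∧ α ≡ 3 [ZMOD 8]) ∨ (2 ≤ μ ∧ α ≡ 7 [ZMOD 8])) := by
  have h3 : (α ≡ 3 [ZMOD 8]) ↔ α % 8 = 3 := by rw [Int.modEq_iff_dvd]; omega
  have h7 : (α ≡ 7 [ZMOD 8]) ↔ α % 8 = 7 := by rw [Int.modEq_iff_dvd]; omega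
  rcases Nat.lt_or_ge μ 2 with hc | hc
  · have hμ1 : μ = 1 := by omega
    subst hμ1
    have hb : ∃ k, β^2 = 8*k + 1 := by
      obtain ⟨j, rfl⟩ := hβ
      obtain ⟨u, hu⟩ := Int.even_mul_succ_self j
      refine ⟨u, ?_⟩
      have h1 : (2*j+1)^2 = 4*(j*(j+1)) + 1 := by ring
      rw [h1, hu]; ring
    obtain ⟨k, hk⟩ := hb
    rw [h3]
    constructor
    · intro h; left; refine ⟨rfl, ?_⟩
      have : (4:ℤ)^1 * β^2 - α = 32*k + 4 - α := by rw [hk]; ring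
      omega
    · rintro (⟨-, h⟩ | ⟨h2, -⟩)
      · have : (4:ℤ)^1 * β^2 - α = 32*k + 4 - α := by rw [hk]; ring
        omega
      · omega
  · have h8 : ∃ k, (4:ℤ)^μ = 8 * k := by
      refine ⟨4^(μ-2) * 2, ?_⟩
      have : μ = (μ - 2) + 2 := by omega
      conv_lhs => rw [this]
      rw [pow_add]; ring
    obtain ⟨k, hk⟩ := h8
    rw [h7]
    have hkb : (4:ℤ)^μ * β^2 = 8 * (k * β^2) := by rw [hk]; ring
    constructor
    · intro h; right; exact ⟨hc, by omega⟩
    · rintro (⟨h1, -⟩ | ⟨-, h⟩)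
      · omega
      · omega

open PowerSeries in
lemma aux_coeffPS {R : Type*} [CommRing R] (c0 c1 c2 : R) (n : ℕ) :
    (PowerSeries.coeff (R := R) n) (C (R := R) c0 + C (R := R) c1 * X + C (R := R) c2 * X^2) =
      if n = 0 then c0 else if n = 1 then c1 else if n = 2 then c2 else 0 := by
  simp only [map_add, PowerSeries.coeff_C, PowerSeries.coeff_C_mul, PowerSeries.coeff_X,
    PowerSeries.coeff_X_pow, mul_ite, mul_one, mul_zero]
  split_ifs <;> simp_all

-- product coefficient as a range sum
open PowerSeries in
lemma aux_coeff_mul {R : Type*} [CommRing R] (a b : R⟦X⟧) (n : ℕ) :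
    (PowerSeries.coeff (R := R) n) (a * b) =
      ∑ k ∈ Finset.range (n+1), (coeff (R := R) k a) * (coeff (R := R) (n-k) b) := by
  rw [PowerSeries.coeff_mul, Finset.Nat.sum_antidiagonal_eq_sum_range_succ_mk]

lemma aux_odd_sq_mod8' {c : ℤ} (h : c % 2 = 1) : c^2 % 8 = 1 := by
  obtain ⟨j, rfl⟩ : ∃ j, c = 2*j+1 := ⟨(c-1)/2, by omega⟩
  obtain ⟨t, ht⟩ := Int.even_mul_succ_self j
  have : (2*j+1)^2 = 4*(j*(j+1)) + 1 := by ring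
  omega

lemma aux_zmod4 : ∀ (e x u v s t : ZMod 4), (x = 1 ∨ x = 3) → (e = 1 ∨ e = 3) →
    2*e*(s+t) + x*u + v*(-x) = 0 → 2*(x*t + v*u + s*(-x)) = 0 → u + v = 0 := by decide

lemma aux_core (α β a1 b1 a2 b2 a3 b3 a4 b4 ε : ℤ) (ν μ : ℕ) (hν : 1 ≤ ν) (hμ : 1 ≤ μ)
    (hα : α % 2 = 1) (hε : ε = 1 ∨ ε = -1)
    (h1 : a1 + b1 = ε * (2*2^μ) * β)
    (h2 : a1*b1 = α - ε*2^ν*(a2+b2))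
    (h3 : ε*2^ν*(a3+b3) + a1*b2 + a2*b1 = 0)
    (h4 : ε*2^ν*(a4+b4) + a1*b3 + a2*b2 + a3*b1 = 0) :
    ((4:ℤ)^μ*β^2 - α) % 8 = 1 := by
  have hε2 : ε*ε = 1 := by rcases hε with h|h <;> rw [h] <;> norm_num
  have h4μ : (4:ℤ)^μ = 2^μ*2^μ := by
    rw [show (4:ℤ) = 2*2 by norm_num, mul_pow]
  -- oddness of a1, b1
  have hodd : (a1*b1) % 2 = 1 := by
    have hd1 : (2:ℤ) ∣ ε*2^ν*(a2+b2) := by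
      refine Dvd.dvd.mul_right ?_ _
      exact Dvd.dvd.mul_left ⟨2^(ν-1), by rw [← pow_succ']; congr 1; omega⟩ ε
    obtain ⟨w, hw⟩ := hd1
    omega
  have ha1 : a1 % 2 = 1 := by
    rcases Int.even_or_odd a1 with he | ho
    · obtain ⟨t, rfl⟩ := he
      have : (t+t)*b1 = 2*(t*b1) := by ring
      omega
    · exact Int.odd_iff.1 ho
  have hb1 : b1 % 2 = 1 := by
    rcases Int.even_or_odd b1 with he | ho
    · obtain ⟨t, rfl⟩ := he
      have : a1*(t+t) = 2*(a1*t) := by ring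
      omega
    · exact Int.odd_iff.1 ho
  -- d is odd
  have hdodd : ((4:ℤ)^μ*β^2 - α) % 2 = 1 := by
    have hk : ∃ k:ℤ, (4:ℤ)^μ = 2*k := ⟨2*4^(μ-1), by
      conv_lhs => rw [show μ = 1 + (μ-1) by omega]
      rw [pow_add]; ring⟩
    obtain ⟨k, hk⟩ := hk
    have : (4:ℤ)^μ*β^2 = 2*(k*β^2) := by rw [hk]; ring
    omega
  -- main identity
  have hid : 4*((4:ℤ)^μ*β^2 - α) = (a1-b1)^2 - ε*(2^ν*4)*(a2+b2) := by
    rw [h4μ]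
    linear_combination (-(a1+b1)-ε*(2*2^μ)*β)*h1 + 4*h2 + (-(4:ℤ)*(2^μ*2^μ)*β^2)*hε2
  -- 8 ∣ 2^ν (a2+b2)
  have h8 : (8:ℤ) ∣ 2^ν*(a2+b2) := by
    rcases Nat.lt_or_ge ν 3 with hν3 | hν3
    · rcases Nat.lt_or_ge ν 2 with hν2 | hν2
      · -- ν = 1
        have hν1 : ν = 1 := by omega
        subst hν1
        -- 4 ∣ a1 + b1
        have h2μ : (2:ℤ)^μ = 2*2^(μ-1) := by
          rw [← pow_succ']; congr 1; omega
        have hdvd4 : (4:ℤ) ∣ a1 + b1 := ⟨ε*2^(μ-1)*β, by rw [h1, h2μ]; ring⟩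
        have hxy : ((b1 : ZMod 4)) = -((a1 : ZMod 4)) := by
          have h0 : ((a1 + b1 : ℤ) : ZMod 4) = 0 :=
            (ZMod.intCast_zmod_eq_zero_iff_dvd _ 4).2 (by exact_mod_cast hdvd4)
          push_cast at h0
          linear_combination h0
        have hx : ((a1 : ZMod 4) = 1 ∨ (a1 : ZMod 4) = 3) := by
          have : a1 % 4 = 1 ∨ a1 % 4 = 3 := by omega
          rcases this with h | h
          · left
            have := (ZMod.intCast_eq_intCast_iff' a1 1 4).2 (by omega)
            simpa using this
          · right
            have := (ZMod.intCast_eq_intCast_iff' a1 3 4).2 (by omega)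
            simpa using this
        have he : ((ε : ZMod 4) = 1 ∨ (ε : ZMod 4) = 3) := by
          rcases hε with h | h <;> rw [h]
          · left; norm_num
          · right; decide
        have hc3 : 2*(ε:ZMod 4)*((a3:ZMod 4)+(b3:ZMod 4)) + (a1:ZMod 4)*(b2:ZMod 4)
            + (a2:ZMod 4)*(-(a1:ZMod 4)) = 0 := by
          have := congrArg (fun z : ℤ => (z : ZMod 4)) h3
          push_cast at this
          rw [hxy] at this
          linear_combination this
        have hc4 : 2*((a1:ZMod 4)*(b3:ZMod 4) + (a2:ZMod 4)*(b2:ZMod 4)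
            + (a3:ZMod 4)*(-(a1:ZMod 4))) = 0 := by
          have h4' : (4:ℤ)*(ε*(a4+b4)) + 2*(a1*b3 + a2*b2 + a3*b1) = 0 := by
            linear_combination 2*h4
          have := congrArg (fun z : ℤ => (z : ZMod 4)) h4'
          push_cast at this
          rw [hxy] at this
          have h40 : ((4:ZMod 4)) = 0 := by decide
          rw [h40] at this
          linear_combination this
        have := aux_zmod4 (ε:ZMod 4) (a1:ZMod 4) (b2:ZMod 4) (a2:ZMod 4) (a3:ZMod 4) (b3:ZMod 4)
          hx he hc3 hc4
        have hdvd : (4:ℤ) ∣ (b2 + a2) := by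
          have h0 : ((b2 + a2 : ℤ) : ZMod 4) = 0 := by push_cast; linear_combination this
          exact_mod_cast (ZMod.intCast_zmod_eq_zero_iff_dvd _ 4).1 h0
        obtain ⟨k, hk⟩ := hdvd
        exact ⟨k, by rw [pow_one, show a2 + b2 = b2 + a2 by ring, hk]; ring⟩
      · -- ν = 2
        have hν2' : ν = 2 := by omega
        subst hν2'
        have hc3 : ((a1:ZMod 2))*(b2:ZMod 2) + (a2:ZMod 2)*(b1:ZMod 2) = 0 := by
          have h3' : (2:ℤ)*(ε*2*(a3+b3)) + (a1*b2 + a2*b1) = 0 := by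
            linear_combination h3
          have := congrArg (fun z : ℤ => (z : ZMod 2)) h3'
          push_cast at this
          have h20 : ((2:ZMod 2)) = 0 := by decide
          rw [h20] at this
          linear_combination this
        have hx : ((a1 : ZMod 2) = 1) := by
          have := (ZMod.intCast_eq_intCast_iff' a1 1 2).2 (by omega)
          simpa using this
        have hy : ((b1 : ZMod 2) = 1) := by
          have := (ZMod.intCast_eq_intCast_iff' b1 1 2).2 (by omega)
          simpa using this
        rw [hx, hy, mul_one, one_mul] at hc3
        have hdvd : (2:ℤ) ∣ (a1*0 + (b2 + a2)) := by
          have h0 : ((b2 + a2 : ℤ) : ZMod 2) = 0 := by push_cast; linear_combination hc3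
          have := (ZMod.intCast_zmod_eq_zero_iff_dvd (b2+a2) 2).1 h0
          simpa using this
        simp at hdvd
        obtain ⟨k, hk⟩ := hdvd
        exact ⟨k, by rw [show ((2:ℤ)^2*(a2+b2)) = 4*(b2+a2) by ring, hk]; ring⟩
    · -- ν ≥ 3
      exact ⟨2^(ν-3)*(a2+b2), by
        conv_lhs => rw [show ν = 3 + (ν-3) by omega]
        rw [pow_add]; ring⟩
  -- conclude
  obtain ⟨k, hk⟩ := h8
  have hid2 : 4*((4:ℤ)^μ*β^2 - α) = (a1-b1)^2 - 32*(ε*k) := by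
    rw [hid]
    linear_combination (-4*ε)*hk
  obtain ⟨c, hc⟩ : ∃ c, a1 - b1 = 2*c := ⟨(a1-b1)/2, by omega⟩
  have hd : (4:ℤ)^μ*β^2 - α = c^2 - 8*(ε*k) := by
    have h4' : 4*((4:ℤ)^μ*β^2 - α) = 4*(c^2 - 8*(ε*k)) := by
      rw [hid2, hc]; ring
    linarith
  have hcodd : c % 2 = 1 := by
    rcases Int.even_or_odd c with he | ho
    · exfalso
      obtain ⟨t, rfl⟩ := he
      have : (t+t)^2 = 2*(2*t*t) := by ring
      omega
    · exact Int.odd_iff.1 ho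
  have := aux_odd_sq_mod8' hcodd
  omega

-- nonunit: polynomial with nonunit constant coeff
lemma aux_poly_nonunit {p : Polynomial ℤ_[2]} (h : ¬ IsUnit (p.eval 0)) : ¬ IsUnit p :=
  fun hu => h (hu.map (Polynomial.evalRingHom 0))

lemma aux_two_pow_nonunit (ν : ℕ) (hν : 1 ≤ ν) : ¬ IsUnit ((2:ℤ_[2])^ν) := by
  rw [aux_unit_iff]
  push_neg
  exact ⟨2^(ν-1), by rw [← pow_succ']; congr 1; omega⟩

open Polynomial in
lemma aux_L3 {α β : ℤ} (hα : Odd α) (hβ : Odd β) (ν μ : ℕ) (hν : 1 ≤ ν) (hμ : 1 ≤ μ)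
    (hcond : ((4:ℤ)^μ * β^2 - α) % 8 = 1) :
    ∃ a b : Polynomial ℤ_[2], ¬ IsUnit a ∧ ¬ IsUnit b ∧
      Polynomial.C ((4 : ℤ_[2]) ^ ν) +
        Polynomial.C ((2 : ℤ_[2]) ^ (ν+μ+1) * (β : ℤ_[2])) * Polynomial.X +
        Polynomial.C ((α : ℤ)  : ℤ_[2]) * Polynomial.X ^ 2 = a * b := by
  obtain ⟨s, hs, hsu⟩ := aux_sqrt hcond
  have hs' : s^2 = (2:ℤ_[2])^μ * 2^μ * (β:ℤ_[2])^2 - (α:ℤ_[2]) := by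
    rw [hs]; push_cast
    rw [show ((4:ℤ_[2]))^μ = 2^μ * 2^μ by rw [show (4:ℤ_[2]) = 2*2 by norm_num, mul_pow]]
  set c1 : ℤ_[2] := s - 2^μ * β with hc1
  set c2 : ℤ_[2] := -(2^μ * β) - s with hc2
  have hprod : c1 * c2 = (α : ℤ_[2]) := by rw [hc1, hc2]; linear_combination -hs'
  have hmid : (2:ℤ_[2])^ν * (-(c1 + c2)) = 2^(ν+μ+1) * β := by
    rw [hc1, hc2, show ν+μ+1 = (ν+μ)+1 from rfl, pow_succ, pow_add]; ring
  refine ⟨Polynomial.C ((2:ℤ_[2])^ν) - Polynomial.C c1 * X,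
          Polynomial.C ((2:ℤ_[2])^ν) - Polynomial.C c2 * X, ?_, ?_, ?_⟩
  · apply aux_poly_nonunit
    simpa using aux_two_pow_nonunit ν hν
  · apply aux_poly_nonunit
    simpa using aux_two_pow_nonunit ν hν
  · rw [show ((4:ℤ_[2]))^ν = 2^ν * 2^ν by rw [show (4:ℤ_[2]) = 2*2 by norm_num, mul_pow]]
    rw [← hprod, ← hmid]
    simp only [map_mul, map_add, map_neg]
    ring

open Polynomial in
lemma aux_coeffPoly {R : Type*} [CommRing R] (c0 c1 c2 : R) (n : ℕ) :
    (Polynomial.C c0 + Polynomial.C c1 * X + Polynomial.C c2 * X^2).coeff n =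
      if n = 0 then c0 else if n = 1 then c1 else if n = 2 then c2 else 0 := by
  simp only [Polynomial.coeff_add, Polynomial.coeff_C, Polynomial.coeff_C_mul,
    Polynomial.coeff_X, Polynomial.coeff_X_pow, mul_ite, mul_one, mul_zero]
  rcases n with _|n
  · norm_num
  rcases n with _|n
  · norm_num
  rcases n with _|n
  · norm_num
  · norm_num

open Polynomial in
lemma aux_L4 {α β : ℤ} (hα : Odd α) (hβ : Odd β) (ν μ : ℕ) (hν : 1 ≤ ν) (hμ : 1 ≤ μ)
    (hfact : ∃ a b : Polynomial ℤ_[2], ¬ IsUnit a ∧ ¬ IsUnit b ∧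
      Polynomial.C ((4 : ℤ_[2]) ^ ν) +
        Polynomial.C ((2 : ℤ_[2]) ^ (ν+μ+1) * (β : ℤ_[2])) * Polynomial.X +
        Polynomial.C ((α : ℤ) : ℤ_[2]) * Polynomial.X ^ 2 = a * b) :
    ((4:ℤ)^μ * β^2 - α) % 8 = 1 := by
  obtain ⟨a, b, hua, hub, hab⟩ := hfact
  have hαu : IsUnit ((α:ℤ) : ℤ_[2]) := aux_odd_unit hα
  set f : Polynomial ℤ_[2] := Polynomial.C ((4 : ℤ_[2]) ^ ν) +
        Polynomial.C ((2 : ℤ_[2]) ^ (ν+μ+1) * (β : ℤ_[2])) * Polynomial.X +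
        Polynomial.C ((α : ℤ) : ℤ_[2]) * Polynomial.X ^ 2 with hf
  have hfq : f = Polynomial.C ((α : ℤ) : ℤ_[2]) * X^2 +
      Polynomial.C ((2 : ℤ_[2]) ^ (ν+μ+1) * (β : ℤ_[2])) * X + Polynomial.C ((4 : ℤ_[2]) ^ ν) := by
    rw [hf]; ring
  have hdeg : f.natDegree = 2 := by rw [hfq]; exact natDegree_quadratic hαu.ne_zero
  have hfne : f ≠ 0 := fun h => by rw [h] at hdeg; simp at hdeg
  have hane : a ≠ 0 := fun h => hfne (by rw [hab, h, zero_mul])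
  have hbne : b ≠ 0 := fun h => hfne (by rw [hab, h, mul_zero])
  have hdegs : a.natDegree + b.natDegree = 2 := by
    rw [← Polynomial.natDegree_mul hane hbne, ← hab, hdeg]
  -- degree-0 factor impossible
  have hconst : ∀ u v : Polynomial ℤ_[2], ¬ IsUnit u → u * v = f → u.natDegree ≠ 0 := by
    intro u v hu huv hdeg0
    obtain ⟨r, hr⟩ := natDegree_eq_zero.1 hdeg0
    have h2 : r * v.coeff 2 = ((α : ℤ) : ℤ_[2]) := by
      have := congrArg (fun p => Polynomial.coeff p 2) huv
      simp only [← hr, Polynomial.coeff_C_mul] at this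
      rw [this, hf, aux_coeffPoly]
      norm_num
    have : IsUnit r := isUnit_of_mul_isUnit_left (h2 ▸ hαu)
    exact hu (hr ▸ (Polynomial.isUnit_C.2 this))
  have hda : a.natDegree = 1 := by
    have h1 := hconst a b hua hab.symm
    have h2 := hconst b a hub (by rw [mul_comm, ← hab])
    omega
  have hdb : b.natDegree = 1 := by omega
  have ha2 : a.coeff 2 = 0 := Polynomial.coeff_eq_zero_of_natDegree_lt (by omega)
  have hb2 : b.coeff 2 = 0 := Polynomial.coeff_eq_zero_of_natDegree_lt (by omega)
  -- coefficient equations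
  have hcoeff : ∀ n : ℕ, f.coeff n = (a*b).coeff n := fun n => by rw [hab]
  have hmul : ∀ n : ℕ, (a*b).coeff n = ∑ k ∈ Finset.range (n+1), a.coeff k * b.coeff (n-k) := by
    intro n; rw [Polynomial.coeff_mul, Finset.Nat.sum_antidiagonal_eq_sum_range_succ_mk]
  have hfc : ∀ n : ℕ, f.coeff n =
      if n = 0 then (4:ℤ_[2])^ν else if n = 1 then 2^(ν+μ+1) * β else if n = 2 then ((α:ℤ):ℤ_[2]) else 0 := by
    intro n; rw [hf]; exact aux_coeffPoly _ _ _ n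
  have E0 : a.coeff 0 * b.coeff 0 = (4:ℤ_[2])^ν := by
    have h := hfc 0
    rw [hcoeff 0, hmul 0] at h
    simpa [Finset.sum_range_succ] using h
  have E1 : a.coeff 0 * b.coeff 1 + a.coeff 1 * b.coeff 0 = (2:ℤ_[2])^(ν+μ+1) * β := by
    have h := hfc 1
    rw [hcoeff 1, hmul 1] at h
    simpa [Finset.sum_range_succ] using h
  have E2 : a.coeff 1 * b.coeff 1 = ((α:ℤ) : ℤ_[2]) := by
    have h := hfc 2
    rw [hcoeff 2, hmul 2] at h
    simp only [Finset.sum_range_succ, Finset.sum_range_zero, ha2, hb2] at h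
    norm_num at h
    linear_combination h
  -- discriminant is a square
  set t : ℤ_[2] := a.coeff 0 * b.coeff 1 - a.coeff 1 * b.coeff 0 with htdef
  have h4ν : ((4:ℤ_[2]))^ν = 2^ν * 2^ν := by rw [show (4:ℤ_[2]) = 2*2 by norm_num, mul_pow]
  have hm : (2:ℤ_[2])^(ν+μ+1) = 2^ν * 2^μ * 2 := by rw [pow_add, pow_add, pow_one]
  have hdc : (((4:ℤ)^μ * β^2 - α : ℤ) : ℤ_[2]) = 2^μ*2^μ*(β:ℤ_[2])^2 - ((α:ℤ):ℤ_[2]) := by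
    push_cast
    rw [show ((4:ℤ_[2]))^μ = 2^μ * 2^μ by rw [show (4:ℤ_[2]) = 2*2 by norm_num, mul_pow]]
  have ht2 : t^2 = (2^(ν+1))^2 * (((4:ℤ)^μ * β^2 - α : ℤ) : ℤ_[2]) := by
    rw [hdc, htdef]
    rw [h4ν] at E0
    rw [hm] at E1
    linear_combination (a.coeff 0 * b.coeff 1 + a.coeff 1 * b.coeff 0 + 2^ν*2^μ*2*(β:ℤ_[2]))*E1
      - 4*(a.coeff 1 * b.coeff 1)*E0 - ((2:ℤ_[2])^(ν+1))^2*E2 + (2^ν*2^ν*4 - ((2:ℤ_[2])^(ν+1))^2)*E2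
  -- d is odd
  have hdodd : ((4:ℤ)^μ * β^2 - α) % 2 = 1 := by
    have h4 : ∃ k:ℤ, (4:ℤ)^μ = 2*k := by
      refine ⟨2*4^(μ-1), ?_⟩
      have h' : μ = 1 + (μ-1) := by omega
      conv_lhs => rw [h']
      rw [pow_add]; ring
    obtain ⟨k, hk⟩ := h4
    have hαo : α % 2 = 1 := Int.odd_iff.1 hα
    have : (4:ℤ)^μ * β^2 - α = 2*(k*β^2) - α := by rw [hk]; ring
    omega
  have hnd : ‖(((4:ℤ)^μ*β^2 - α : ℤ) : ℤ_[2])‖ = 1 := by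
    refine le_antisymm (PadicInt.norm_le_one _) ?_
    by_contra hlt
    push_neg at hlt
    have := (PadicInt.norm_int_lt_one_iff_dvd _).1 hlt
    omega
  -- norm of t
  have hnp : ‖(2:ℤ_[2])^(ν+1)‖ = (2:ℝ)^(-((ν:ℤ)+1)) := by
    have h2 : ((2:ℕ):ℤ_[2]) = (2:ℤ_[2]) := by norm_num
    rw [← h2, PadicInt.norm_p_pow]
    norm_num
  have hnt2 : ‖t‖ * ‖t‖ = ((2:ℝ)^(-((ν:ℤ)+1))) * ((2:ℝ)^(-((ν:ℤ)+1))) := by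
    have h1 : ‖t^2‖ = ‖t‖ * ‖t‖ := by rw [sq, norm_mul]
    have h2 : ‖((2:ℤ_[2])^(ν+1))^2 * (((4:ℤ)^μ * β^2 - α : ℤ) : ℤ_[2])‖
        = ((2:ℝ)^(-((ν:ℤ)+1))) * ((2:ℝ)^(-((ν:ℤ)+1))) := by
      rw [norm_mul, hnd, mul_one, sq, norm_mul, hnp]
    rw [← h1, ht2, h2]
  have hnt : ‖t‖ = (2:ℝ)^(-((ν:ℤ)+1)) := by
    have h0 : (0:ℝ) ≤ ‖t‖ := norm_nonneg _
    have hb : (0:ℝ) < (2:ℝ)^(-((ν:ℤ)+1)) := by positivity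
    nlinarith [hnt2]
  have hdvd : (2:ℤ_[2])^(ν+1) ∣ t := by
    have hsp := (PadicInt.norm_le_pow_iff_mem_span_pow t (ν+1)).1 (by
      rw [hnt]
      have : ((2:ℕ):ℝ) = (2:ℝ) := by norm_num
      rw [this]
      norm_num)
    rw [Ideal.mem_span_singleton] at hsp
    have h2 : ((2:ℕ):ℤ_[2]) = (2:ℤ_[2]) := by norm_num
    rwa [h2] at hsp
  obtain ⟨s, hst⟩ := hdvd
  have hs2 : s^2 = (((4:ℤ)^μ * β^2 - α : ℤ) : ℤ_[2]) := by
    have hne : ((2:ℤ_[2])^(ν+1))^2 ≠ 0 := by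
      apply pow_ne_zero; apply pow_ne_zero
      exact_mod_cast (by norm_num : ((2:ℤ_[2])) ≠ 0)
    apply mul_left_cancel₀ hne
    rw [← ht2, hst]; ring
  exact aux_sq_mod8 s hs2 hdodd

open PowerSeries in
lemma aux_ps_nonunit_const {a : PowerSeries ℤ} (h : ¬ IsUnit a) :
    ¬ IsUnit ((PowerSeries.constantCoeff (R := ℤ)) a) := by
  intro hu
  apply h
  apply IsUnit.of_mul_eq_one (a := a) (PowerSeries.invOfUnit a hu.unit)
  exact PowerSeries.mul_invOfUnit a hu.unit hu.unit_spec.symm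

open PowerSeries in
lemma aux_L2 {α β : ℤ} (hα : Odd α) (hβ : Odd β) (ν μ : ℕ) (hν : 1 ≤ ν) (hμ : 1 ≤ μ)
    (hfact : ∃ a b : PowerSeries ℤ, ¬ IsUnit a ∧ ¬ IsUnit b ∧
      (PowerSeries.C (R := ℤ)) ((4 : ℤ) ^ ν) +
        (PowerSeries.C (R := ℤ)) ((2 : ℤ) ^ (ν+μ+1) * β) * PowerSeries.X +
        (PowerSeries.C (R := ℤ)) α * PowerSeries.X ^ 2 = a * b) :
    ((4:ℤ)^μ * β^2 - α) % 8 = 1 := by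
  obtain ⟨a, b, hua, hub, hab⟩ := hfact
  have hE : ∀ n : ℕ, (if n = 0 then (4:ℤ)^ν else if n=1 then 2^(ν+μ+1)*β else if n=2 then α else 0)
      = ∑ k ∈ Finset.range (n+1), (coeff (R := ℤ) k a) * (coeff (R := ℤ) (n-k) b) := by
    intro n
    rw [← aux_coeff_mul, ← hab, aux_coeffPS]
  have E0 : (4:ℤ)^ν = coeff (R := ℤ) 0 a * coeff (R := ℤ) 0 b := by
    simpa [Finset.sum_range_succ] using hE 0
  have E1 : (2:ℤ)^(ν+μ+1)*β = coeff (R := ℤ) 0 a * coeff (R := ℤ) 1 b + coeff (R := ℤ) 1 a * coeff (R := ℤ) 0 b := by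
    simpa [Finset.sum_range_succ] using hE 1
  have E2 : α = coeff (R := ℤ) 0 a * coeff (R := ℤ) 2 b + coeff (R := ℤ) 1 a * coeff (R := ℤ) 1 b
      + coeff (R := ℤ) 2 a * coeff (R := ℤ) 0 b := by
    have h := hE 2
    simp only [Finset.sum_range_succ, Finset.sum_range_zero] at h
    norm_num at h
    simp only [← PowerSeries.coeff_zero_eq_constantCoeff_apply] at h
    linear_combination h
  have E3 : (0:ℤ) = coeff (R := ℤ) 0 a * coeff (R := ℤ) 3 b + coeff (R := ℤ) 1 a * coeff (R := ℤ) 2 b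
      + coeff (R := ℤ) 2 a * coeff (R := ℤ) 1 b + coeff (R := ℤ) 3 a * coeff (R := ℤ) 0 b := by
    have h := hE 3
    simp only [Finset.sum_range_succ, Finset.sum_range_zero] at h
    norm_num at h
    simp only [← PowerSeries.coeff_zero_eq_constantCoeff_apply] at h
    linear_combination h
  have E4 : (0:ℤ) = coeff (R := ℤ) 0 a * coeff (R := ℤ) 4 b + coeff (R := ℤ) 1 a * coeff (R := ℤ) 3 b
      + coeff (R := ℤ) 2 a * coeff (R := ℤ) 2 b + coeff (R := ℤ) 3 a * coeff (R := ℤ) 1 b + coeff (R := ℤ) 4 a * coeff (R := ℤ) 0 b := by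
    have h := hE 4
    simp only [Finset.sum_range_succ, Finset.sum_range_zero] at h
    norm_num at h
    simp only [← PowerSeries.coeff_zero_eq_constantCoeff_apply] at h
    linear_combination h
  set a0 := coeff (R := ℤ) 0 a with ha0d
  set b0 := coeff (R := ℤ) 0 b with hb0d
  set a1 := coeff (R := ℤ) 1 a
  set b1 := coeff (R := ℤ) 1 b
  set a2 := coeff (R := ℤ) 2 a
  set b2 := coeff (R := ℤ) 2 b
  set a3 := coeff (R := ℤ) 3 a
  set b3 := coeff (R := ℤ) 3 b
  set a4 := coeff (R := ℤ) 4 a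
  set b4 := coeff (R := ℤ) 4 b
  have hua0 : ¬ IsUnit a0 := by
    rw [ha0d, PowerSeries.coeff_zero_eq_constantCoeff]
    exact aux_ps_nonunit_const hua
  have hub0 : ¬ IsUnit b0 := by
    rw [hb0d, PowerSeries.coeff_zero_eq_constantCoeff]
    exact aux_ps_nonunit_const hub
  -- natAbs analysis
  have hnat : a0.natAbs * b0.natAbs = 2^(2*ν) := by
    have h1 : (a0*b0).natAbs = ((4:ℤ)^ν).natAbs := by rw [← E0]
    rw [Int.natAbs_mul] at h1
    rw [h1]
    have : ((4:ℤ)^ν).natAbs = 4^ν := by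
      rw [Int.natAbs_pow]
      norm_num
    rw [this, show (4:ℕ) = 2^2 by norm_num, ← pow_mul]
  have hdvd : a0.natAbs ∣ 2^(2*ν) := Dvd.intro _ hnat
  obtain ⟨i, hi, hpi⟩ := (Nat.dvd_prime_pow Nat.prime_two).1 hdvd
  have hpj : b0.natAbs = 2^(2*ν - i) := by
    have hpos : 0 < 2^i := pow_pos (by norm_num) i
    have h1 : a0.natAbs * b0.natAbs = 2^i * 2^(2*ν-i) := by
      rw [hnat, ← pow_add]
      congr 1
      omega
    rw [hpi] at h1
    exact Nat.eq_of_mul_eq_mul_left hpos h1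
  have hi1 : 1 ≤ i := by
    rcases Nat.eq_zero_or_pos i with h | h
    · exfalso
      apply hua0
      simp [Int.isUnit_iff_natAbs_eq, hpi, h]
    · exact h
  have hj1 : 1 ≤ 2*ν - i := by
    rcases Nat.eq_zero_or_pos (2*ν - i) with h | h
    · exfalso
      apply hub0
      simp [Int.isUnit_iff_natAbs_eq, hpj, h]
    · exact h
  set j := 2*ν - i with hjd
  have hij : i + j = 2*ν := by omega
  -- sign analysis
  have hpow2 : ((2:ℤ)^i) * 2^j = 4^ν := by
    rw [← pow_add, hij, show (4:ℤ) = 2^2 by norm_num, ← pow_mul]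
  have hpospow : (0:ℤ) < 2^i * 2^j := by positivity
  obtain ⟨ε, hε, ha0, hb0⟩ : ∃ ε:ℤ, (ε = 1 ∨ ε = -1) ∧ a0 = ε*2^i ∧ b0 = ε*2^j := by
    rcases Int.natAbs_eq a0 with h | h <;> rcases Int.natAbs_eq b0 with h' | h'
    · exact ⟨1, Or.inl rfl, by rw [h, hpi]; push_cast; ring, by rw [h', hpj]; push_cast; ring⟩
    · exfalso
      have : a0 * b0 = -(2^i * 2^j) := by
        rw [h, h', hpi, hpj]; push_cast; ring
      rw [← E0, hpow2] at this
      omega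
    · exfalso
      have : a0 * b0 = -(2^i * 2^j) := by
        rw [h, h', hpi, hpj]; push_cast; ring
      rw [← E0, hpow2] at this
      omega
    · exact ⟨-1, Or.inr rfl, by rw [h, hpi]; push_cast; ring, by rw [h', hpj]; push_cast; ring⟩
  -- oddness of a1 b1 (needed for i = ν argument)
  have hα2 : α % 2 = 1 := Int.odd_iff.1 hα
  have hodd : (a1*b1) % 2 = 1 := by
    have hd1 : (2:ℤ) ∣ a0 * b2 := Dvd.dvd.mul_right ⟨ε*2^(i-1), by
      rw [ha0]; rw [show (2:ℤ)^i = 2*2^(i-1) by rw [← pow_succ']; congr 1; omega]; ring⟩ _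
    have hd2 : (2:ℤ) ∣ a2 * b0 := Dvd.dvd.mul_left ⟨ε*2^(j-1), by
      rw [hb0]; rw [show (2:ℤ)^j = 2*2^(j-1) by rw [← pow_succ']; congr 1; omega]; ring⟩ _
    obtain ⟨w1, hw1⟩ := hd1
    obtain ⟨w2, hw2⟩ := hd2
    omega
  have ha1 : a1 % 2 = 1 := by
    rcases Int.even_or_odd a1 with he | ho
    · obtain ⟨t, ht⟩ := he
      have : a1*b1 = 2*(t*b1) := by rw [ht]; ring
      omega
    · exact Int.odd_iff.1 ho
  have hb1 : b1 % 2 = 1 := by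
    rcases Int.even_or_odd b1 with he | ho
    · obtain ⟨t, ht⟩ := he
      have : a1*b1 = 2*(a1*t) := by rw [ht]; ring
      omega
    · exact Int.odd_iff.1 ho
  -- i = ν
  have hiν : i = ν := by
    by_contra hne
    rcases Nat.lt_or_ge i ν with hlt | hge
    · -- i < ν, so i+1 ≤ ν ≤ j and i+1 ≤ m
      have key : (2:ℤ)^(i+1) ∣ ε*2^i*b1 := by
        have h1 : ε*2^i*b1 = 2^(ν+μ+1)*β - a1*(ε*2^j) := by
          rw [← ha0, ← hb0]; linear_combination -E1
        rw [h1]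
        apply dvd_sub
        · exact Dvd.dvd.mul_right (pow_dvd_pow 2 (by omega)) _
        · exact Dvd.dvd.mul_left (Dvd.dvd.mul_left (pow_dvd_pow 2 (by omega)) ε) a1
      have key2 : (2:ℤ)^i*2 ∣ 2^i*b1 := by
        have : (2:ℤ)^(i+1) = 2^i*2 := by rw [pow_succ]
        rw [← this]
        rcases hε with h | h
        · rw [h] at key; simpa using key
        · rw [h] at key
          have : -(2^i*b1) = (-1)*2^i*b1 := by ring
          rw [← dvd_neg, this]
          exact key
      have : (2:ℤ) ∣ b1 := (mul_dvd_mul_iff_left (a := (2:ℤ)^i) (by positivity)).1 key2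
      omega
    · -- ν < i, so j < ν, j+1 ≤ ν and j+1 ≤ i
      have hjlt : j + 1 ≤ ν := by omega
      have key : (2:ℤ)^(j+1) ∣ a1*(ε*2^j) := by
        have h1 : a1*(ε*2^j) = 2^(ν+μ+1)*β - ε*2^i*b1 := by
          rw [← ha0, ← hb0]; linear_combination -E1
        rw [h1]
        apply dvd_sub
        · exact Dvd.dvd.mul_right (pow_dvd_pow 2 (by omega)) _
        · exact Dvd.dvd.mul_right (Dvd.dvd.mul_left (pow_dvd_pow 2 (by omega)) ε) b1
      have key2 : (2:ℤ)^j*2 ∣ 2^j*a1 := by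
        have h2 : (2:ℤ)^(j+1) = 2^j*2 := by rw [pow_succ]
        rw [← h2]
        rcases hε with h | h
        · rw [h] at key
          have : a1*((1:ℤ)*2^j) = 2^j*a1 := by ring
          rwa [this] at key
        · rw [h] at key
          have : a1*((-1:ℤ)*2^j) = -(2^j*a1) := by ring
          rw [this, dvd_neg] at key
          exact key
      have : (2:ℤ) ∣ a1 := (mul_dvd_mul_iff_left (a := (2:ℤ)^j) (by positivity)).1 key2
      omega
  have hjν : j = ν := by omega
  rw [hiν] at ha0
  rw [hjν] at hb0
  -- assemble hypotheses of aux_core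
  have hε2 : ε * ε = 1 := by rcases hε with h|h <;> rw [h] <;> norm_num
  have h2νne : ((2:ℤ)^ν) ≠ 0 := by positivity
  have h1' : a1 + b1 = ε * (2*2^μ) * β := by
    apply mul_left_cancel₀ h2νne
    have hpm : (2:ℤ)^(ν+μ+1) = 2^ν*(2*2^μ) := by rw [pow_add, pow_add, pow_one]; ring
    rw [ha0, hb0, hpm] at E1
    linear_combination (-ε)*E1 + (-(2:ℤ)^ν*(a1+b1))*hε2
  have h2' : a1*b1 = α - ε*2^ν*(a2+b2) := by
    rw [ha0, hb0] at E2
    linear_combination -E2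
  have h3' : ε*2^ν*(a3+b3) + a1*b2 + a2*b1 = 0 := by
    rw [ha0, hb0] at E3
    linear_combination -E3
  have h4' : ε*2^ν*(a4+b4) + a1*b3 + a2*b2 + a3*b1 = 0 := by
    rw [ha0, hb0] at E4
    linear_combination -E4
  exact aux_core α β a1 b1 a2 b2 a3 b3 a4 b4 ε ν μ hν hμ hα2 hε h1' h2' h3' h4'

open PowerSeries in
lemma aux_L1 {α β : ℤ} (hα : Odd α) (hβ : Odd β) (ν μ : ℕ) (hν : 1 ≤ ν) (hμ : 1 ≤ μ)
    (hcond : ((4:ℤ)^μ * β^2 - α) % 8 = 1) :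
    ∃ a b : PowerSeries ℤ, ¬ IsUnit a ∧ ¬ IsUnit b ∧
      (PowerSeries.C (R := ℤ)) ((4 : ℤ) ^ ν) +
        (PowerSeries.C (R := ℤ)) ((2 : ℤ) ^ (ν+μ+1) * β) * PowerSeries.X +
        (PowerSeries.C (R := ℤ)) α * PowerSeries.X ^ 2 = a * b := by
  obtain ⟨s, hs, hsu⟩ := aux_sqrt hcond
  have hs' : s^2 = (2:ℤ_[2])^μ * 2^μ * (β:ℤ_[2])^2 - ((α:ℤ):ℤ_[2]) := by
    rw [hs]; push_cast
    rw [show ((4:ℤ_[2]))^μ = 2^μ * 2^μ by rw [show (4:ℤ_[2]) = 2*2 by norm_num, mul_pow]]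
  set t : ℤ_[2] := s - 2^μ * (β:ℤ_[2]) with htdef
  have hkey : t^2 + 2*2^μ*(β:ℤ_[2])*t + ((α:ℤ):ℤ_[2]) = 0 := by
    rw [htdef]; linear_combination hs'
  have htu : IsUnit t := by
    rw [aux_unit_iff]
    intro hdvd
    have hds : (2:ℤ_[2]) ∣ s := by
      have hh : s = t + 2^μ * (β:ℤ_[2]) := by rw [htdef]; ring
      rw [hh]
      apply dvd_add hdvd
      exact Dvd.dvd.mul_right ⟨2^(μ-1), by rw [← pow_succ']; congr 1; omega⟩ _
    obtain ⟨c, hc⟩ := hds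
    have h4 : (((4:ℤ)^μ * β^2 - α : ℤ) : ℤ_[2]) = 2^2 * c^2 := by
      rw [← hs, hc]; ring
    have := aux_int_dvd h4
    omega
  have hαu : IsUnit ((α:ℤ) : ℤ_[2]) := aux_odd_unit hα
  set Ai : ℤ_[2] := ↑hαu.unit⁻¹ with hAidef
  have hAAi : ((α:ℤ) : ℤ_[2]) * Ai = 1 := by
    rw [hAidef]
    simpa [hαu.unit_spec] using hαu.unit.mul_inv
  have huu : IsUnit (t * Ai) := htu.mul (Units.isUnit _)
  set uinv : ℤ_[2] := ↑huu.unit⁻¹ with huinvdef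
  have huui : (t * Ai) * uinv = 1 := by
    rw [huinvdef]
    simpa [huu.unit_spec] using huu.unit.mul_inv
  have hroot : ((α:ℤ):ℤ_[2]) * (2^ν*(t*Ai))^2 + (2^ν*2^μ*2)*(β:ℤ_[2])*(2^ν*(t*Ai))
      + 2^ν*2^ν = 0 := by
    linear_combination ((2:ℤ_[2])^ν)^2*((α:ℤ):ℤ_[2])*Ai^2*hkey
      - (2*(2:ℤ_[2])^μ*(β:ℤ_[2])*t*((2:ℤ_[2])^ν)^2*Ai
         + ((2:ℤ_[2])^ν)^2*(1+((α:ℤ):ℤ_[2])*Ai))*hAAi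
  have hrr' : ((α:ℤ):ℤ_[2]) * ((2^ν*(t*Ai)) * (2^ν*uinv*Ai)) = 2^ν*2^ν := by
    linear_combination ((2:ℤ_[2])^ν*2^ν*((α:ℤ):ℤ_[2])*Ai)*huui
      + ((2:ℤ_[2])^ν*2^ν)*hAAi
  have h2ne : ((2:ℤ_[2])) ≠ 0 := by
    intro h
    have : ‖(2:ℤ_[2])‖ = (2:ℝ)⁻¹ := by
      have h2 : ((2:ℕ):ℤ_[2]) = (2:ℤ_[2]) := by norm_num
      rw [← h2, PadicInt.norm_p]; norm_num
    rw [h] at this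
    simp at this
  have h2νne : ((2:ℤ_[2])^ν) ≠ 0 := pow_ne_zero _ h2ne
  have hrne : (2:ℤ_[2])^ν*(t*Ai) ≠ 0 := mul_ne_zero h2νne huu.ne_zero
  have hsum : ((α:ℤ):ℤ_[2]) * ((2^ν*(t*Ai)) + (2^ν*uinv*Ai)) = -((2^ν*2^μ*2)*(β:ℤ_[2])) := by
    have hmul0 : (2^ν*(t*Ai)) * (((α:ℤ):ℤ_[2]) * ((2^ν*(t*Ai)) + (2^ν*uinv*Ai))
        + (2^ν*2^μ*2)*(β:ℤ_[2])) = 0 := by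
      linear_combination hroot + hrr'
    rcases mul_eq_zero.1 hmul0 with h | h
    · exact absurd h hrne
    · linear_combination h
  -- abbreviations for the roots
  set r : ℤ_[2] := 2^ν*(t*Ai) with hrdef
  set r' : ℤ_[2] := 2^ν*uinv*Ai with hr'def
  -- build the integer coefficient sequence by successive approximation
  have approx : ∀ z : ℤ_[2], ∃ kc : ℤ × ℤ_[2], z - kc.1 = 2^ν * kc.2 := by
    intro z
    obtain ⟨k, c, h⟩ := aux_approx z ν
    exact ⟨(k, c), h⟩
  set step : ℤ_[2] → ℤ × ℤ_[2] := fun z => (approx z).choose with hstepdef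
  have hstep : ∀ z : ℤ_[2], z - (step z).1 = 2^ν * (step z).2 := fun z => (approx z).choose_spec
  set S : ℕ → ℤ × ℤ_[2] :=
    fun n => Nat.rec ((2:ℤ)^ν, uinv) (fun _ p => (-(step p.2).1, (step p.2).2 * uinv)) n with hSdef
  set g : ℕ → ℤ := fun n => (S n).1 with hgdef
  set sq : ℕ → ℤ_[2] := fun n => (S n).2 with hsqdef
  have hg0 : g 0 = 2^ν := rfl
  have hsq0 : sq 0 = uinv := rfl
  have hrec : ∀ n : ℕ, r * sq (n+1) = sq n + ((g (n+1) : ℤ) : ℤ_[2]) := by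
    intro n
    have h1 : sq (n+1) = (step (sq n)).2 * uinv := rfl
    have h2 : g (n+1) = -(step (sq n)).1 := rfl
    have h3 := hstep (sq n)
    rw [h1, h2, hrdef]
    push_cast
    linear_combination (-1:ℤ_[2])*h3 + (2^ν*(step (sq n)).2)*huui
  -- the 2-adic power series
  set G2 : PowerSeries ℤ_[2] := PowerSeries.mk (fun n => ((g n : ℤ) : ℤ_[2])) with hG2def
  set q : PowerSeries ℤ_[2] := PowerSeries.mk (fun n => -(sq n)) with hqdef
  have hcg : ∀ k : ℕ, PowerSeries.coeff (R := ℤ_[2]) k G2 = ((g k : ℤ) : ℤ_[2]) := by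
    intro k; rw [hG2def, PowerSeries.coeff_mk]
  have hfactor : G2 = (PowerSeries.X - PowerSeries.C (R := ℤ_[2]) r) * q := by
    ext n
    rw [sub_mul, map_sub, PowerSeries.coeff_C_mul, hcg n]
    rcases n with _ | m
    · rw [PowerSeries.coeff_zero_X_mul, hqdef, PowerSeries.coeff_mk, hg0, hsq0, hrdef]
      push_cast
      linear_combination (-(2:ℤ_[2])^ν)*huui
    · rw [PowerSeries.coeff_succ_X_mul, hqdef, PowerSeries.coeff_mk, PowerSeries.coeff_mk]
      linear_combination (-1:ℤ_[2])*(hrec m)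
  have hq0 : PowerSeries.constantCoeff (R := ℤ_[2]) q = -uinv := by
    rw [hqdef, PowerSeries.constantCoeff_mk, hsq0]
  set w := PowerSeries.invOfUnit q (-huu.unit⁻¹) with hwdef
  have hqw : q * w = 1 := by
    rw [hwdef]
    apply PowerSeries.mul_invOfUnit
    rw [hq0, Units.val_neg, ← huinvdef]
  set H2 : PowerSeries ℤ_[2] := PowerSeries.C (R := ℤ_[2]) ((α:ℤ):ℤ_[2]) *
    (PowerSeries.X - PowerSeries.C (R := ℤ_[2]) r') * w with hH2def
  set fZ2 : PowerSeries ℤ_[2] := PowerSeries.C (R := ℤ_[2]) (2^ν*2^ν) +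
    PowerSeries.C (R := ℤ_[2]) ((2^ν*2^μ*2)*(β:ℤ_[2])) * PowerSeries.X +
    PowerSeries.C (R := ℤ_[2]) ((α:ℤ):ℤ_[2]) * PowerSeries.X^2 with hfZ2def
  have hGH : G2 * H2 = fZ2 := by
    rw [hfactor, hH2def, hfZ2def]
    have h1 : (PowerSeries.X - PowerSeries.C (R := ℤ_[2]) r) * q *
        (PowerSeries.C (R := ℤ_[2]) ((α:ℤ):ℤ_[2]) * (PowerSeries.X - PowerSeries.C (R := ℤ_[2]) r') * w)
        = (PowerSeries.C (R := ℤ_[2]) ((α:ℤ):ℤ_[2]) * ((PowerSeries.X - PowerSeries.C (R := ℤ_[2]) r) *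
          (PowerSeries.X - PowerSeries.C (R := ℤ_[2]) r'))) * (q * w) := by ring
    rw [h1, hqw, mul_one]
    rw [show ((2:ℤ_[2])^ν*2^ν) = ((α:ℤ):ℤ_[2]) * (r * r') from hrr'.symm,
        show ((2:ℤ_[2])^ν*2^μ*2)*(β:ℤ_[2]) = -(((α:ℤ):ℤ_[2]) * (r + r')) from by
          linear_combination hsum]
    simp only [map_mul, map_add, map_neg]
    ring
  -- constant coefficient of H2
  have hH20 : PowerSeries.coeff (R := ℤ_[2]) 0 H2 = 2^ν := by
    have h0 := congrArg (PowerSeries.constantCoeff (R := ℤ_[2])) hGH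
    rw [map_mul] at h0
    have hcg0 : PowerSeries.constantCoeff (R := ℤ_[2]) G2 = ((g 0 : ℤ) : ℤ_[2]) := by
      rw [hG2def, PowerSeries.constantCoeff_mk]
    have hcf : PowerSeries.constantCoeff (R := ℤ_[2]) fZ2 = 2^ν*2^ν := by
      rw [hfZ2def]; simp
    rw [hcg0, hcf, hg0] at h0
    push_cast at h0
    rw [PowerSeries.coeff_zero_eq_constantCoeff_apply]
    exact mul_left_cancel₀ h2νne h0
  -- the integer coefficients function
  set FI : ℕ → ℤ := fun n => if n = 0 then 4^ν else if n = 1 then 2^(ν+μ+1)*β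
    else if n = 2 then α else 0 with hFIdef
  have hfZc : ∀ n : ℕ, PowerSeries.coeff (R := ℤ_[2]) n fZ2 = ((FI n : ℤ) : ℤ_[2]) := by
    intro n
    rw [hfZ2def, aux_coeffPS]
    simp only [hFIdef]
    have e4 : (((4:ℤ)^ν : ℤ) : ℤ_[2]) = (2:ℤ_[2])^ν*2^ν := by
      push_cast
      rw [show ((4:ℤ_[2]))^ν = 2^ν*2^ν by rw [show (4:ℤ_[2]) = 2*2 by norm_num, mul_pow]]
    have e2 : (((2:ℤ)^(ν+μ+1)*β : ℤ) : ℤ_[2]) = ((2:ℤ_[2])^ν*2^μ*2)*(β:ℤ_[2]) := by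
      push_cast
      rw [pow_add, pow_add, pow_one]
    split_ifs
    · rw [e4]
    · rw [e2]
    · rfl
    · norm_num
  -- all coefficients of H2 are integers
  have hint : ∀ n : ℕ, ∃ k : ℤ, ((k : ℤ) : ℤ_[2]) = PowerSeries.coeff (R := ℤ_[2]) n H2 := by
    intro n
    induction n using Nat.strong_induction_on with
    | _ n ih =>
      rcases n with _ | m
      · exact ⟨2^ν, by rw [hH20]; push_cast; ring⟩
      · have heq := congrArg (PowerSeries.coeff (R := ℤ_[2]) (m+1)) hGH
        rw [aux_coeff_mul, hfZc (m+1), Finset.sum_range_succ'] at heq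
        have hmem : (∑ i ∈ Finset.range (m+1),
            PowerSeries.coeff (R := ℤ_[2]) (i+1) G2 * PowerSeries.coeff (R := ℤ_[2]) (m+1-(i+1)) H2)
            ∈ (Int.castRingHom ℤ_[2]).range := by
          apply Subring.sum_mem
          intro i hi
          apply Subring.mul_mem
          · exact RingHom.mem_range.2 ⟨g (i+1), (hcg (i+1)).symm⟩
          · obtain ⟨k, hk⟩ := ih (m+1-(i+1)) (by omega)
            exact RingHom.mem_range.2 ⟨k, hk⟩
        obtain ⟨D, hD⟩ := RingHom.mem_range.1 hmem
        rw [← hD, hcg 0, hg0] at heq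
        norm_num at heq
        have hD2 : ((FI (m+1) - D : ℤ) : ℤ_[2]) = (2:ℤ_[2])^ν * PowerSeries.coeff (R := ℤ_[2]) (m+1) H2 := by
          push_cast
          push_cast at heq
          linear_combination -heq
        obtain ⟨e, he⟩ : ((2:ℤ)^ν) ∣ (FI (m+1) - D) := by
          have := aux_int_dvd (n := ν) hD2
          exact_mod_cast this
        refine ⟨e, ?_⟩
        apply mul_left_cancel₀ h2νne
        rw [← hD2, he]
        push_cast
        ring
  set H : ℕ → ℤ := fun n => (hint n).choose with hHdef
  have hH : ∀ n, ((H n : ℤ) : ℤ_[2]) = PowerSeries.coeff (R := ℤ_[2]) n H2 := fun n => (hint n).choose_spec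
  -- conclude
  refine ⟨PowerSeries.mk (fun n => (g n : ℤ)), PowerSeries.mk H, ?_, ?_, ?_⟩
  · intro hu
    have hval := hu.map (PowerSeries.constantCoeff (R := ℤ))
    rw [PowerSeries.constantCoeff_mk, hg0, Int.isUnit_iff] at hval
    have h2 : (2:ℤ)^1 ≤ 2^ν := pow_le_pow_right₀ (by norm_num) hν
    rcases hval with h | h <;> omega
  · intro hu
    have hval := hu.map (PowerSeries.constantCoeff (R := ℤ))
    rw [PowerSeries.constantCoeff_mk] at hval
    have hH0 : H 0 = 2^ν := by
      have h1 := hH 0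
      rw [hH20] at h1
      have h2 : (((2:ℤ)^ν : ℤ) : ℤ_[2]) = ((H 0 : ℤ) : ℤ_[2]) := by
        rw [h1]; push_cast; ring
      exact (Int.cast_injective h2).symm
    rw [hH0, Int.isUnit_iff] at hval
    have h2 : (2:ℤ)^1 ≤ 2^ν := pow_le_pow_right₀ (by norm_num) hν
    rcases hval with h | h <;> omega
  · have hinj : Function.Injective (PowerSeries.map (Int.castRingHom ℤ_[2])) := by
      intro x y h
      ext n
      have := congrArg (PowerSeries.coeff (R := ℤ_[2]) n) h
      simp only [PowerSeries.coeff_map, eq_intCast] at this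
      exact_mod_cast this
    have hmG : PowerSeries.map (Int.castRingHom ℤ_[2]) (PowerSeries.mk (fun n => (g n : ℤ))) = G2 := by
      ext n
      rw [PowerSeries.coeff_map, PowerSeries.coeff_mk, hcg n]
      simp [eq_intCast]
    have hmH : PowerSeries.map (Int.castRingHom ℤ_[2]) (PowerSeries.mk H) = H2 := by
      ext n
      rw [PowerSeries.coeff_map, PowerSeries.coeff_mk]
      rw [← hH n]
      simp [eq_intCast]
    have e4 : (((4:ℤ)^ν : ℤ) : ℤ_[2]) = (2:ℤ_[2])^ν*2^ν := by
      push_cast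
      rw [show ((4:ℤ_[2]))^ν = 2^ν*2^ν by rw [show (4:ℤ_[2]) = 2*2 by norm_num, mul_pow]]
    have e2 : (((2:ℤ)^(ν+μ+1)*β : ℤ) : ℤ_[2]) = ((2:ℤ_[2])^ν*2^μ*2)*(β:ℤ_[2]) := by
      push_cast
      rw [pow_add, pow_add, pow_one]
    have hmf : PowerSeries.map (Int.castRingHom ℤ_[2])
        ((PowerSeries.C (R := ℤ)) ((4 : ℤ) ^ ν) +
          (PowerSeries.C (R := ℤ)) ((2 : ℤ) ^ (ν+μ+1) * β) * PowerSeries.X +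
          (PowerSeries.C (R := ℤ)) α * PowerSeries.X ^ 2) = fZ2 := by
      ext n
      rw [PowerSeries.coeff_map, aux_coeffPS, hfZ2def, aux_coeffPS]
      simp only [eq_intCast]
      split_ifs
      · push_cast
        rw [show ((4:ℤ_[2]))^ν = 2^ν*2^ν by rw [show (4:ℤ_[2]) = 2*2 by norm_num, mul_pow]]
      · push_cast
        rw [pow_add, pow_add, pow_one]
      · push_cast
        ring
      · push_cast
        ring
    apply hinj
    rw [hmf, map_mul, hmG, hmH, hGH]


theorem stmt_18 (α β : ℤ) (hα : Odd α) (hβ : Odd β) (ν m : ℕ)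
    (hν : 1 ≤ ν) (hm : ν + 1 < m) :
    ((∃ a b : PowerSeries ℤ, ¬ IsUnit a ∧ ¬ IsUnit b ∧
        (PowerSeries.C (R := ℤ)) ((4 : ℤ) ^ ν) +
          (PowerSeries.C (R := ℤ)) ((2 : ℤ) ^ m * β) * PowerSeries.X +
          (PowerSeries.C (R := ℤ)) α * PowerSeries.X ^ 2 = a * b) ↔
      ((m = ν + 2 ∧ α ≡ 3 [ZMOD 8]) ∨ (ν + 3 ≤ m ∧ α ≡ 7 [ZMOD 8]))) ∧
    ((∃ a b : PowerSeries ℤ, ¬ IsUnit a ∧ ¬ IsUnit b ∧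
        (PowerSeries.C (R := ℤ)) ((4 : ℤ) ^ ν) +
          (PowerSeries.C (R := ℤ)) ((2 : ℤ) ^ m * β) * PowerSeries.X +
          (PowerSeries.C (R := ℤ)) α * PowerSeries.X ^ 2 = a * b) ↔
      (∃ a b : Polynomial ℤ_[2], ¬ IsUnit a ∧ ¬ IsUnit b ∧
        Polynomial.C ((4 : ℤ_[2]) ^ ν) +
          Polynomial.C ((2 : ℤ_[2]) ^ m * (β : ℤ_[2])) * Polynomial.X +
          Polynomial.C (α : ℤ_[2]) * Polynomial.X ^ 2 = a * b)) := by
  obtain ⟨μ, hμ1, rfl⟩ : ∃ μ, 1 ≤ μ ∧ m = ν + μ + 1 := ⟨m - ν - 1, by omega, by omega⟩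
  constructor
  · constructor
    · intro h
      have hc := aux_L2 hα hβ ν μ hν hμ1 h
      rcases (aux_cond_iff hα hβ hμ1).1 hc with ⟨h1, h2⟩ | ⟨h1, h2⟩
      · exact Or.inl ⟨by omega, h2⟩
      · exact Or.inr ⟨by omega, h2⟩
    · intro h
      apply aux_L1 hα hβ ν μ hν hμ1
      apply (aux_cond_iff hα hβ hμ1).2
      rcases h with ⟨h1, h2⟩ | ⟨h1, h2⟩
      · exact Or.inl ⟨by omega, h2⟩
      · exact Or.inr ⟨by omega, h2⟩
  · constructor
    · intro h
      exact aux_L3 hα hβ ν μ hν hμ1 (aux_L2 hα hβ ν μ hν hμ1 h)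
    · intro h
      exact aux_L1 hα hβ ν μ hν hμ1 (aux_L4 hα hβ ν μ hν hμ1 h)
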